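/- Under the hypotheses that F = |F|^{1/2} Q |F|^{1/2} with Q a contraction satisfying |(Qg,g)| ≥ μ‖g‖², and ‖φ‖² = c for fixed c > 0, there exist constants c₁, c₂ > 0 such that c₁ |(|F|^{1/2}φ,φ)|² ≤ |(Fφ,φ)| ≤ c₂ (|F|^{1/2}φ,φ), namely c₁ = μ/c and c₂ = ‖|F|^{1/2}‖. -/

import Mathlib

local notation "⟪" x ", " y "⟫" => @inner ℂ _ _ x y

section Aux

variable {H : Type*} [NormedAddCommGroup H] [InnerProductSpace ℂ H] [CompleteSpace H]

private lemma coeff_tsum (ψ : HilbertBasis ℕ ℂ H) (t : ℕ → ℂ) (C : ℝ)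
    (hC : ∀ j, ‖t j‖ ≤ C) (g : H) (i : ℕ) :
    ⟪(ψ i : H), ∑' j : ℕ, t j • (⟪(ψ j : H), g⟫ • (ψ j : H))⟫ = t i * ⟪(ψ i : H), g⟫ := by
  have hsum : Summable (fun j : ℕ => t j • (⟪(ψ j : H), g⟫ • (ψ j : H))) := by
    have heq : (fun j : ℕ => t j • (⟪(ψ j : H), g⟫ • (ψ j : H)))
        = fun j => (LinearIsometry.toSpanSingleton ℂ H (ψ.orthonormal.1 j))
          (t j * ⟪(ψ j : H), g⟫) := by
      funext j
      simp [LinearIsometry.toSpanSingleton_apply, smul_smul]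
    rw [heq, ψ.orthonormal.orthogonalFamily.summable_iff_norm_sq_summable]
    refine Summable.of_nonneg_of_le (fun j => by positivity) (fun j => ?_)
      ((ψ.orthonormal.inner_products_summable (x := g)).mul_left (C ^ 2))
    have h1 : ‖t j * ⟪(ψ j : H), g⟫‖ = ‖t j‖ * ‖⟪(ψ j : H), g⟫‖ := norm_mul _ _
    have h2 := hC j
    have h3 : (0:ℝ) ≤ ‖⟪(ψ j : H), g⟫‖ := norm_nonneg _
    have h4 : (0:ℝ) ≤ ‖t j‖ := norm_nonneg _
    rw [h1, mul_pow]
    exact mul_le_mul_of_nonneg_right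
      (pow_le_pow_left₀ h4 h2 2) (sq_nonneg _)
  have hmap := (innerSL ℂ (ψ i : H)).map_tsum hsum
  simp only [innerSL_apply_apply] at hmap
  rw [hmap, tsum_eq_single i]
  · have h1 : ⟪(ψ i : H), (ψ i : H)⟫ = 1 := by
      rw [@inner_self_eq_norm_sq_to_K ℂ, ψ.orthonormal.1 i]
      norm_num
    rw [inner_smul_right, inner_smul_right, h1]
    ring
  · intro j hj
    rw [inner_smul_right, inner_smul_right, ψ.orthonormal.2 (Ne.symm hj)]
    ring

end Aux

/-- Equivalence of the DSM and FDSM indicators: there exist `c₁ = μ/c > 0` and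
`c₂ = ‖|F|^{1/2}‖ > 0` with
`c₁ |(|F|^{1/2} φ, φ)|² ≤ |(F φ, φ)| ≤ c₂ (|F|^{1/2} φ, φ)`. -/
theorem equivalence_of_indicators
    {H : Type*} [NormedAddCommGroup H] [InnerProductSpace ℂ H] [CompleteSpace H]
    (ψ : HilbertBasis ℕ ℂ H) (lam : ℕ → ℂ) (hlam : ∀ j, lam j ≠ 0)
    (F S Q : H →L[ℂ] H)
    (hFc : IsCompactOperator F) (hFinj : Function.Injective F)
    (hF : ∀ g : H, F g = ∑' j : ℕ, lam j • (⟪ψ j, g⟫ • ψ j))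
    (hS : ∀ g : H, S g = ∑' j : ℕ, ((Real.sqrt ‖lam j‖ : ℂ)) • (⟪ψ j, g⟫ • ψ j))
    (hQ : ∀ g : H, Q g = ∑' j : ℕ, (lam j / (‖lam j‖ : ℂ)) • (⟪ψ j, g⟫ • ψ j))
    (hQcontr : ∀ g : H, ‖Q g‖ ≤ ‖g‖)
    (μ : ℝ) (hμ : 0 < μ) (hcoer : ∀ g : H, μ * ‖g‖ ^ 2 ≤ ‖⟪Q g, g⟫‖)
    (φ : H) (c : ℝ) (hc : 0 < c) (hφ : ‖φ‖ ^ 2 = c) :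
    ∃ c₁ c₂ : ℝ, 0 < c₁ ∧ 0 < c₂ ∧ c₁ = μ / c ∧ c₂ = ‖S‖ ∧
      c₁ * ‖⟪S φ, φ⟫‖ ^ 2 ≤ ‖⟪F φ, φ⟫‖ ∧
      ‖⟪F φ, φ⟫‖ ≤ c₂ * (⟪S φ, φ⟫).re := by
  set s : ℕ → ℂ := fun j => ((Real.sqrt ‖lam j‖ : ℝ) : ℂ) with hs_def
  set a : ℕ → ℂ := fun j => ⟪(ψ j : H), φ⟫ with ha_def
  -- action on basis vectors
  have hSpsi : ∀ i, S (ψ i) = s i • (ψ i : H) := by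
    intro i
    rw [hS, tsum_eq_single i]
    · have h1 : ⟪(ψ i : H), (ψ i : H)⟫ = 1 := by
        rw [@inner_self_eq_norm_sq_to_K ℂ, ψ.orthonormal.1 i]; norm_num
      rw [h1, one_smul]
    · intro j hj
      rw [ψ.orthonormal.2 hj, zero_smul, smul_zero]
  -- norm bounds
  have hsnorm : ∀ i, ‖s i‖ = Real.sqrt ‖lam i‖ := by
    intro i
    simp [hs_def, Complex.norm_real, abs_of_nonneg (Real.sqrt_nonneg _)]
  have hSnorm : ∀ i, ‖s i‖ ≤ ‖S‖ := by
    intro i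
    have h := S.le_opNorm (ψ i)
    rw [hSpsi i, norm_smul, ψ.orthonormal.1 i, mul_one, mul_one] at h
    exact h
  have hFnorm : ∀ i, ‖lam i‖ ≤ ‖F‖ := by
    intro i
    have hFpsi : F (ψ i) = lam i • (ψ i : H) := by
      rw [hF, tsum_eq_single i]
      · have h1 : ⟪(ψ i : H), (ψ i : H)⟫ = 1 := by
          rw [@inner_self_eq_norm_sq_to_K ℂ, ψ.orthonormal.1 i]; norm_num
        rw [h1, one_smul]
      · intro j hj
        rw [ψ.orthonormal.2 hj, zero_smul, smul_zero]
    have h := F.le_opNorm (ψ i)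
    rw [hFpsi, norm_smul, ψ.orthonormal.1 i, mul_one, mul_one] at h
    exact h
  have hQnorm : ∀ i, ‖lam i / (‖lam i‖ : ℂ)‖ ≤ 1 := by
    intro i
    have hne : ‖lam i‖ ≠ 0 := norm_ne_zero_iff.mpr (hlam i)
    rw [norm_div, Complex.norm_real, Real.norm_eq_abs, abs_of_nonneg (norm_nonneg _),
      div_self hne]
  have hSpos : 0 < ‖S‖ := by
    have h0 : 0 < Real.sqrt ‖lam 0‖ :=
      Real.sqrt_pos.mpr (norm_pos_iff.mpr (hlam 0))
    calc (0:ℝ) < Real.sqrt ‖lam 0‖ := h0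
      _ = ‖s 0‖ := (hsnorm 0).symm
      _ ≤ ‖S‖ := hSnorm 0
  -- coefficients
  have bF : ∀ i, ⟪(ψ i : H), F φ⟫ = lam i * a i := by
    intro i; rw [hF]; exact coeff_tsum ψ lam ‖F‖ hFnorm φ i
  have bS : ∀ (g : H) i, ⟪(ψ i : H), S g⟫ = s i * ⟪(ψ i : H), g⟫ := by
    intro g i; rw [hS]
    exact coeff_tsum ψ s ‖S‖ hSnorm g i
  have bQ : ∀ (g : H) i, ⟪(ψ i : H), Q g⟫ = (lam i / (‖lam i‖ : ℂ)) * ⟪(ψ i : H), g⟫ := by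
    intro g i; rw [hQ]
    exact coeff_tsum ψ (fun j => lam j / (‖lam j‖ : ℂ)) 1 hQnorm g i
  -- conjugate coefficient lemmas
  have hφconj : ∀ i, ⟪φ, (ψ i : H)⟫ = (starRingEnd ℂ) (a i) := fun i =>
    (inner_conj_symm _ _).symm
  have hSconj : ∀ i, ⟪S φ, (ψ i : H)⟫ = (starRingEnd ℂ) (s i * a i) := fun i => by
    rw [← bS φ i]
    exact (inner_conj_symm _ _).symm
  -- key identity  ⟪φ, F φ⟫ = ⟪S φ, Q (S φ)⟫
  have key : ⟪φ, F φ⟫ = ⟪S φ, Q (S φ)⟫ := by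
    rw [← ψ.tsum_inner_mul_inner φ (F φ), ← ψ.tsum_inner_mul_inner (S φ) (Q (S φ))]
    apply tsum_congr
    intro i
    simp only [bF, bQ, bS, hφconj, hSconj]
    have hss : s i * s i = (‖lam i‖ : ℂ) := by
      rw [hs_def]
      rw [← Complex.ofReal_mul, Real.mul_self_sqrt (norm_nonneg _)]
    have hne : (‖lam i‖ : ℂ) ≠ 0 := by
      simpa using norm_ne_zero_iff.mpr (hlam i)
    have hconj : (starRingEnd ℂ) (s i) = s i := Complex.conj_ofReal _
    have hstep : (starRingEnd ℂ) (s i * a i) * (lam i / (‖lam i‖ : ℂ) * (s i * a i))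
        = s i * s i * (lam i / (‖lam i‖ : ℂ)) * ((starRingEnd ℂ) (a i) * a i) := by
      rw [map_mul, hconj]; ring
    rw [hstep, hss, mul_comm ((‖lam i‖ : ℂ)) (lam i / (‖lam i‖ : ℂ)),
      div_mul_cancel₀ _ hne]
    ring
  -- real series
  have hsum1 := (ψ.hasSum_inner_mul_inner φ (S φ)).mapL Complex.reCLM
  have hsum2 := (ψ.hasSum_inner_mul_inner (S φ) (S φ)).mapL Complex.reCLM
  have hterm1 : ∀ i, Complex.reCLM (⟪φ, (ψ i : H)⟫ * ⟪(ψ i : H), S φ⟫)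
      = Real.sqrt ‖lam i‖ * ‖a i‖ ^ 2 := by
    intro i
    simp only [bS, hφconj]
    have hcalc : (starRingEnd ℂ) (a i) * (s i * a i)
        = ((Real.sqrt ‖lam i‖ * ‖a i‖ ^ 2 : ℝ) : ℂ) := by
      rw [show (starRingEnd ℂ) (a i) * (s i * a i)
          = s i * ((starRingEnd ℂ) (a i) * a i) from by ring,
        ← Complex.normSq_eq_conj_mul_self, hs_def]
      rw [← Complex.ofReal_mul]
      congr 1
      rw [Complex.normSq_eq_norm_sq]
    rw [hcalc]
    simp only [Complex.reCLM_apply, Complex.ofReal_re]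
  have hterm2 : ∀ i, Complex.reCLM (⟪S φ, (ψ i : H)⟫ * ⟪(ψ i : H), S φ⟫)
      = ‖lam i‖ * ‖a i‖ ^ 2 := by
    intro i
    simp only [bS, hSconj]
    rw [← Complex.normSq_eq_conj_mul_self]
    have hcalc : Complex.normSq (s i * a i) = ‖lam i‖ * ‖a i‖ ^ 2 := by
      rw [Complex.normSq_eq_norm_sq, norm_mul, hsnorm, mul_pow,
        Real.sq_sqrt (norm_nonneg _)]
    simp only [Complex.reCLM_apply, Complex.ofReal_re, hcalc]
  rw [funext hterm1] at hsum1
  rw [funext hterm2] at hsum2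
  have hre1 : Complex.reCLM ⟪φ, S φ⟫ = (⟪S φ, φ⟫).re := by
    rw [← inner_conj_symm φ (S φ)]
    simp only [Complex.reCLM_apply, Complex.conj_re]
  rw [hre1] at hsum1
  have hre2 : Complex.reCLM ⟪S φ, S φ⟫ = ‖S φ‖ ^ 2 := by
    have := @inner_self_eq_norm_sq ℂ _ _ _ _ (S φ)
    simpa using this
  rw [hre2] at hsum2
  -- ‖S φ‖² ≤ ‖S‖ * re ⟪S φ, φ⟫
  have hup : ‖S φ‖ ^ 2 ≤ ‖S‖ * (⟪S φ, φ⟫).re := by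
    refine hasSum_le (fun i => ?_) hsum2 (hsum1.mul_left ‖S‖)
    have h1 : Real.sqrt ‖lam i‖ ≤ ‖S‖ := by rw [← hsnorm i]; exact hSnorm i
    have h2 : Real.sqrt ‖lam i‖ * Real.sqrt ‖lam i‖ = ‖lam i‖ :=
      Real.mul_self_sqrt (norm_nonneg _)
    have h3 : (0:ℝ) ≤ ‖a i‖ ^ 2 := sq_nonneg _
    have h4 : (0:ℝ) ≤ Real.sqrt ‖lam i‖ := Real.sqrt_nonneg _
    calc ‖lam i‖ * ‖a i‖ ^ 2 = Real.sqrt ‖lam i‖ * (Real.sqrt ‖lam i‖ * ‖a i‖ ^ 2) := by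
          rw [← mul_assoc, h2]
      _ ≤ ‖S‖ * (Real.sqrt ‖lam i‖ * ‖a i‖ ^ 2) :=
          mul_le_mul_of_nonneg_right h1 (mul_nonneg h4 h3)
  -- norms of the indicator
  have hnormeq : ‖⟪F φ, φ⟫‖ = ‖⟪Q (S φ), S φ⟫‖ := by
    rw [← inner_conj_symm (F φ) φ, ← inner_conj_symm (Q (S φ)) (S φ), key]
  -- conclusion
  refine ⟨μ / c, ‖S‖, div_pos hμ hc, hSpos, rfl, rfl, ?_, ?_⟩
  · -- lower bound
    have h1 : μ * ‖S φ‖ ^ 2 ≤ ‖⟪F φ, φ⟫‖ := by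
      rw [hnormeq]; exact hcoer (S φ)
    have h2 : ‖⟪S φ, φ⟫‖ ^ 2 ≤ ‖S φ‖ ^ 2 * c := by
      have := norm_inner_le_norm (𝕜 := ℂ) (S φ) φ
      calc ‖⟪S φ, φ⟫‖ ^ 2 ≤ (‖S φ‖ * ‖φ‖) ^ 2 := by
            apply pow_le_pow_left₀ (norm_nonneg _) this
        _ = ‖S φ‖ ^ 2 * c := by rw [mul_pow, hφ]
    have h3 : μ / c * ‖⟪S φ, φ⟫‖ ^ 2 ≤ μ / c * (‖S φ‖ ^ 2 * c) :=
      mul_le_mul_of_nonneg_left h2 (div_pos hμ hc).le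
    have h4 : μ / c * (‖S φ‖ ^ 2 * c) = μ * ‖S φ‖ ^ 2 := by
      field_simp
    linarith
  · -- upper bound
    have h1 : ‖⟪Q (S φ), S φ⟫‖ ≤ ‖S φ‖ ^ 2 := by
      calc ‖⟪Q (S φ), S φ⟫‖ ≤ ‖Q (S φ)‖ * ‖S φ‖ := norm_inner_le_norm _ _
        _ ≤ ‖S φ‖ * ‖S φ‖ := by
            apply mul_le_mul_of_nonneg_right (hQcontr (S φ)) (norm_nonneg _)
        _ = ‖S φ‖ ^ 2 := (sq ‖S φ‖).symm
    calc ‖⟪F φ, φ⟫‖ = ‖⟪Q (S φ), S φ⟫‖ := hnormeq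
      _ ≤ ‖S φ‖ ^ 2 := h1
      _ ≤ ‖S‖ * (⟪S φ, φ⟫).re := hup
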